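/- arXiv:0807.4318 — 3 statements merged into one kernel-verified Lean document; each statement's English description precedes it below -/
import Mathlib

section
/- For any ε > 0 and any constant C > 0, there exist arbitrarily large integers m and positive integers N₁, N₂, N₃ with N₁N₂N₃ > C·m such that the set {x₁x₂x₃ mod m : x_j ∈ [1, N_j]} misses more than m^((2-ε)/3 - ε) residue classes modulo m. Concretely: if m = qn with q prime and q > m^((1+ε)/3), then none of the n residues q, 2q, …, nq modulo m is of the form x₁x₂x₃ mod m with all x_j ≤ m^((1+ε)/3). -/
lemma key7 (ε : ℝ) (m q n : ℕ) (hm : m = q * n) (hq : q.Prime)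
    (hqm : (m : ℝ) ^ ((1 + ε)/3) < (q : ℝ)) :
    ∀ j : ℕ, 1 ≤ j → j ≤ n →
    ¬ ∃ x₁ x₂ x₃ : ℕ,
        (1 ≤ x₁ ∧ (x₁ : ℝ) ≤ (m : ℝ) ^ ((1 + ε)/3)) ∧
        (1 ≤ x₂ ∧ (x₂ : ℝ) ≤ (m : ℝ) ^ ((1 + ε)/3)) ∧
        (1 ≤ x₃ ∧ (x₃ : ℝ) ≤ (m : ℝ) ^ ((1 + ε)/3)) ∧
        ((x₁ * x₂ * x₃ : ℕ) : ZMod m) = ((j * q : ℕ) : ZMod m) := by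
  rintro j hj1 hjn ⟨x₁, x₂, x₃, ⟨hx1p, h1⟩, ⟨hx2p, h2⟩, ⟨hx3p, h3⟩, heq⟩
  have hx1 : x₁ < q := by exact_mod_cast lt_of_le_of_lt h1 hqm
  have hx2 : x₂ < q := by exact_mod_cast lt_of_le_of_lt h2 hqm
  have hx3 : x₃ < q := by exact_mod_cast lt_of_le_of_lt h3 hqm
  have hmod : x₁ * x₂ * x₃ ≡ j * q [MOD m] := (ZMod.natCast_eq_natCast_iff _ _ _).mp heq
  have hqdvd : q ∣ m := hm ▸ Dvd.intro n rfl
  have hmodq : x₁ * x₂ * x₃ ≡ j * q [MOD q] := hmod.of_dvd hqdvd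
  have h0 : j * q ≡ 0 [MOD q] := Nat.modEq_zero_iff_dvd.mpr ⟨j, mul_comm _ _⟩
  have hdvd : q ∣ x₁ * x₂ * x₃ := Nat.modEq_zero_iff_dvd.mp (hmodq.trans h0)
  rcases (hq.dvd_mul.mp hdvd) with h | h
  · rcases hq.dvd_mul.mp h with h' | h'
    · exact absurd (Nat.le_of_dvd hx1p h') (not_le.mpr hx1)
    · exact absurd (Nat.le_of_dvd hx2p h') (not_le.mpr hx2)
  · exact absurd (Nat.le_of_dvd hx3p h) (not_le.mpr hx3)

lemma inj7 (q n : ℕ) (hq : 0 < q) :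
    Set.InjOn (fun j : ℕ => ((j * q : ℕ) : ZMod (q * n))) (Finset.Icc 1 n) := by
  have main : ∀ j j' : ℕ, j ∈ Finset.Icc 1 n → j' ∈ Finset.Icc 1 n →
      ((j * q : ℕ) : ZMod (q * n)) = ((j' * q : ℕ) : ZMod (q * n)) → j ≤ j' → j = j' := by
    intro j j' hj hj' heq hle
    simp only [Finset.mem_Icc] at hj hj'
    have hmod : j * q ≡ j' * q [MOD q * n] := (ZMod.natCast_eq_natCast_iff _ _ _).mp heq
    have hdvd : q * n ∣ j' * q - j * q :=
      (Nat.modEq_iff_dvd' (Nat.mul_le_mul_right q hle)).mp hmod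
    have h2 : j' * q - j * q = q * (j' - j) := by
      rw [← Nat.sub_mul, mul_comm]
    rw [h2] at hdvd
    have h3 : n ∣ j' - j := (mul_dvd_mul_iff_left hq.ne').mp hdvd
    have h4 : j' - j < n := by omega
    have := Nat.eq_zero_of_dvd_of_lt h3 h4
    omega
  intro j hj j' hj' heq
  rcases le_total j j' with h | h
  · exact main j j' hj hj' heq h
  · exact (main j' j hj' hj heq.symm h).symm

lemma rpow_le_base (b t : ℝ) (hb : 1 ≤ b) (ht : t ≤ 1) : b ^ t ≤ b := by
  have h := Real.rpow_le_rpow_of_exponent_le hb ht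
  rwa [Real.rpow_one] at h

lemma base_le_rpow (b t : ℝ) (hb : 1 ≤ b) (ht : 1 ≤ t) : b ≤ b ^ t := by
  have h := Real.rpow_le_rpow_of_exponent_le hb ht
  rwa [Real.rpow_one] at h


set_option maxHeartbeats 1000000 in
/-- For any ε > 0 and C > 0 there are arbitrarily large m and N₁,N₂,N₃ with N₁N₂N₃ > C·m
such that {x₁x₂x₃ mod m : xⱼ ∈ [1,Nⱼ]} misses more than m^((2-ε)/3-ε) residue classes.
Concretely, if m = qn with q prime, q > m^((1+ε)/3), then none of the residues jq mod m
(1 ≤ j ≤ n) is a product x₁x₂x₃ mod m with all xⱼ ≤ m^((1+ε)/3). -/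
theorem stmt7 :
    ∀ ε : ℝ, 0 < ε → ∀ C : ℝ, 0 < C →
    ((∀ M : ℕ, ∃ m : ℕ, M ≤ m ∧ ∃ N₁ N₂ N₃ : ℕ, 0 < N₁ ∧ 0 < N₂ ∧ 0 < N₃ ∧
        C * (m : ℝ) < ((N₁ * N₂ * N₃ : ℕ) : ℝ) ∧
        (m : ℝ) ^ (((2 : ℝ) - ε)/3 - ε) <
          (({r : ZMod m | r ∉ (Finset.Icc 1 N₁ ×ˢ Finset.Icc 1 N₂ ×ˢ Finset.Icc 1 N₃).image
              (fun t => ((t.1 * t.2.1 * t.2.2 : ℕ) : ZMod m))}.ncard : ℝ))) ∧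
      (∀ m q n : ℕ, m = q * n → q.Prime → (m : ℝ) ^ ((1 + ε)/3) < (q : ℝ) →
        ∀ j : ℕ, 1 ≤ j → j ≤ n →
        ¬ ∃ x₁ x₂ x₃ : ℕ,
            (1 ≤ x₁ ∧ (x₁ : ℝ) ≤ (m : ℝ) ^ ((1 + ε)/3)) ∧
            (1 ≤ x₂ ∧ (x₂ : ℝ) ≤ (m : ℝ) ^ ((1 + ε)/3)) ∧
            (1 ≤ x₃ ∧ (x₃ : ℝ) ≤ (m : ℝ) ^ ((1 + ε)/3)) ∧
            ((x₁ * x₂ * x₃ : ℕ) : ZMod m) = ((j * q : ℕ) : ZMod m))) := by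
  intro ε hε C hC
  refine ⟨?_, fun m q n hm hq hqm => key7 ε m q n hm hq hqm⟩
  intro M
  obtain ⟨e, he_def⟩ : ∃ e : ℝ, e = min ε (1/10) := ⟨_, rfl⟩
  have he0 : 0 < e := he_def ▸ lt_min hε (by norm_num)
  have he1 : e ≤ 1/10 := he_def ▸ min_le_right _ _
  have heε : e ≤ ε := he_def ▸ min_le_left _ _
  have hee : e * e ≤ e := by nlinarith
  obtain ⟨q, hqge, hqprime⟩ :=
    Nat.exists_infinite_primes (max (M + 1) (⌈(8*C+2) ^ (1/(e*e))⌉₊ + 1))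
  have hKpos : (0:ℝ) < 8*C+2 := by linarith
  have hq0 : 0 < q := hqprime.pos
  have hq0R : (0:ℝ) < q := by exact_mod_cast hq0
  have hq1R : (1:ℝ) ≤ q := by exact_mod_cast hq0
  have hqK : 8*C+2 < (q:ℝ) ^ (e*e) := by
    have h1 : (8*C+2 : ℝ) ^ (1/(e*e)) < q := by
      have h2 : ⌈(8*C+2 : ℝ) ^ (1/(e*e))⌉₊ + 1 ≤ q := le_trans (le_max_right _ _) hqge
      have h3 : (⌈(8*C+2 : ℝ) ^ (1/(e*e))⌉₊ : ℝ) < q := by exact_mod_cast by omega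
      exact lt_of_le_of_lt (Nat.le_ceil _) h3
    calc 8*C+2 = ((8*C+2 : ℝ) ^ (1/(e*e))) ^ (e*e) := by
          rw [← Real.rpow_mul hKpos.le, one_div_mul_cancel (by positivity), Real.rpow_one]
      _ < (q:ℝ) ^ (e*e) := Real.rpow_lt_rpow (Real.rpow_nonneg hKpos.le _) h1 (by positivity)
  have hq2R : (2:ℝ) < (q:ℝ) ^ (e*e) := lt_of_le_of_lt (by linarith) hqK
  obtain ⟨n, hn_def⟩ : ∃ n : ℕ, n = ⌊(q:ℝ) ^ (2 - 3*e)⌋₊ + 1 := ⟨_, rfl⟩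
  obtain ⟨m, hm_def⟩ : ∃ m : ℕ, m = q * n := ⟨_, rfl⟩
  have hexp_pos : (0:ℝ) < 2 - 3*e := by linarith
  have hx1 : (1:ℝ) ≤ (q:ℝ) ^ (2-3*e) := Real.one_le_rpow hq1R hexp_pos.le
  have hn_lb : (q:ℝ) ^ (2-3*e) < n := by
    have h := Nat.lt_floor_add_one ((q:ℝ) ^ (2-3*e))
    rw [hn_def]; push_cast; exact h
  have hn_ub : (n:ℝ) ≤ 2 * (q:ℝ) ^ (2-3*e) := by
    have h := Nat.floor_le (le_trans zero_le_one hx1)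
    rw [hn_def]; push_cast; linarith
  have hn_pos : 0 < n := by omega
  have hm_pos : 0 < m := by rw [hm_def]; exact Nat.mul_pos hq0 hn_pos
  have hm0R : (0:ℝ) < m := by exact_mod_cast hm_pos
  have hm1R : (1:ℝ) ≤ m := by exact_mod_cast hm_pos
  have hqm : q ≤ m := by rw [hm_def]; exact Nat.le_mul_of_pos_right q hn_pos
  have hmq : (q:ℝ) ≤ m := by exact_mod_cast hqm
  have hmcast : (m:ℝ) = (q:ℝ) * n := by rw [hm_def]; push_cast; ring
  have hm_ub : (m:ℝ) ≤ 2 * (q:ℝ) ^ (3 - 3*e) := by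
    have h1 : (m:ℝ) ≤ (q:ℝ) * (2 * (q:ℝ) ^ (2-3*e)) := by
      rw [hmcast]; exact mul_le_mul_of_nonneg_left hn_ub hq0R.le
    have h2 : (q:ℝ) * (2 * (q:ℝ) ^ (2-3*e)) = 2 * (q:ℝ) ^ (3-3*e) := by
      rw [show (3-3*e : ℝ) = 1 + (2-3*e) by ring, Real.rpow_add hq0R, Real.rpow_one]; ring
    linarith
  have hα : (0:ℝ) < (1+e)/3 := by linarith
  -- Inequality A : q > m^((1+e)/3)
  have hA : (m:ℝ) ^ ((1+e)/3) < q := by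
    have h1 : (m:ℝ) ^ ((1+e)/3) ≤ (2 * (q:ℝ)^(3-3*e)) ^ ((1+e)/3) :=
      Real.rpow_le_rpow hm0R.le hm_ub hα.le
    have h2 : (2 * (q:ℝ)^(3-3*e)) ^ ((1+e)/3) = 2 ^ ((1+e)/3) * (q:ℝ) ^ (1 - e*e) := by
      rw [Real.mul_rpow (by norm_num) (Real.rpow_nonneg hq0R.le _), ← Real.rpow_mul hq0R.le]
      congr 1
      ring_nf
    have h3 : (2:ℝ) ^ ((1+e)/3) ≤ 2 := rpow_le_base 2 _ one_le_two (by linarith)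
    have h4 : 2 * (q:ℝ) ^ (1 - e*e) < (q:ℝ) ^ (e*e) * (q:ℝ) ^ (1 - e*e) :=
      mul_lt_mul_of_pos_right hq2R (Real.rpow_pos_of_pos hq0R _)
    have h5 : (q:ℝ) ^ (e*e) * (q:ℝ) ^ (1 - e*e) = q := by
      rw [← Real.rpow_add hq0R, show e*e + (1 - e*e) = 1 by ring, Real.rpow_one]
    have h6 : 2 ^ ((1+e)/3) * (q:ℝ)^(1-e*e) ≤ 2 * (q:ℝ)^(1-e*e) :=
      mul_le_mul_of_nonneg_right h3 (Real.rpow_nonneg hq0R.le _)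
    linarith [h1, h2, h4, h5, h6]
  -- Inequality B : n > m^((2-e)/3 - e)
  have hB : (m:ℝ) ^ ((2-e)/3 - e) < n := by
    have hβ : (0:ℝ) ≤ (2-e)/3 - e := by linarith
    have h1 : (m:ℝ) ^ ((2-e)/3-e) ≤ (2 * (q:ℝ)^(3-3*e)) ^ ((2-e)/3-e) :=
      Real.rpow_le_rpow hm0R.le hm_ub hβ
    have h2 : (2 * (q:ℝ)^(3-3*e)) ^ ((2-e)/3-e)
        = 2 ^ ((2-e)/3-e) * (q:ℝ) ^ (2 - 6*e + 4*(e*e)) := by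
      rw [Real.mul_rpow (by norm_num) (Real.rpow_nonneg hq0R.le _), ← Real.rpow_mul hq0R.le]
      congr 1
      ring_nf
    have h3 : (2:ℝ) ^ ((2-e)/3-e) ≤ 2 := rpow_le_base 2 _ one_le_two (by linarith)
    have h4 : (2:ℝ) < (q:ℝ) ^ (3*e - 4*(e*e)) :=
      lt_of_lt_of_le hq2R (Real.rpow_le_rpow_of_exponent_le hq1R (by nlinarith))
    have h5 : (q:ℝ) ^ (3*e-4*(e*e)) * (q:ℝ) ^ (2-6*e+4*(e*e)) = (q:ℝ) ^ (2-3*e) := by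
      rw [← Real.rpow_add hq0R]; congr 1; ring
    have h6 : 2 * (q:ℝ) ^ (2-6*e+4*(e*e)) < (q:ℝ) ^ (2-3*e) := by
      have h6' := mul_lt_mul_of_pos_right h4 (Real.rpow_pos_of_pos hq0R (2-6*e+4*(e*e)))
      rw [h5] at h6'
      exact h6' 
    have h7 : 2 ^ ((2-e)/3-e) * (q:ℝ)^(2-6*e+4*(e*e)) ≤ 2 * (q:ℝ)^(2-6*e+4*(e*e)) :=
      mul_le_mul_of_nonneg_right h3 (Real.rpow_nonneg hq0R.le _)
    linarith [h1, h2, h6, h7, hn_lb]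
  -- N and inequality C
  obtain ⟨N, hN_def⟩ : ∃ N : ℕ, N = ⌊(m:ℝ) ^ ((1+e)/3)⌋₊ := ⟨_, rfl⟩
  have hmα1 : (1:ℝ) ≤ (m:ℝ) ^ ((1+e)/3) := Real.one_le_rpow hm1R hα.le
  have hN_pos : 0 < N := by rw [hN_def]; exact Nat.floor_pos.mpr hmα1
  have hN1R : (1:ℝ) ≤ N := by exact_mod_cast hN_pos
  have hxN : ∀ x : ℕ, x ≤ N → (x:ℝ) ≤ (m:ℝ) ^ ((1+e)/3) := by
    intro x hx
    have hNle : (N:ℝ) ≤ (m:ℝ) ^ ((1+e)/3) := by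
      rw [hN_def]; exact Nat.floor_le (by positivity)
    exact le_trans (Nat.cast_le.mpr hx) hNle
  have hq3 : (3:ℝ) ≤ q := by
    by_contra h
    push_neg at h
    have hq2' : q ≤ 2 := by
      have : q < 3 := by exact_mod_cast h
      omega
    have hq2'' : (q:ℝ) ≤ 2 := by exact_mod_cast hq2'
    have ha : (q:ℝ)^(e*e) ≤ 2^(e*e) := Real.rpow_le_rpow hq0R.le hq2'' (by positivity)
    have hb : (2:ℝ)^(e*e) ≤ 2 := rpow_le_base 2 _ one_le_two (by nlinarith)
    linarith
  have hn3R : (3:ℝ) < n := by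
    have h1 : (q:ℝ) ≤ (q:ℝ)^(2-3*e) := base_le_rpow _ _ hq1R (by linarith)
    linarith
  have hm8 : (8:ℝ) ≤ m := by rw [hmcast]; nlinarith
  have h2m : (2:ℝ) ≤ (m:ℝ) ^ ((1+e)/3) := by
    have h81 : (8:ℝ) ^ ((1:ℝ)/3) = 2 := by
      rw [show (8:ℝ) = 2^(3:ℕ) by norm_num, ← Real.rpow_natCast 2 3,
        ← Real.rpow_mul (by norm_num)]
      norm_num
    calc (2:ℝ) = (8:ℝ) ^ ((1:ℝ)/3) := h81.symm
      _ ≤ (m:ℝ) ^ ((1:ℝ)/3) := Real.rpow_le_rpow (by norm_num) hm8 (by norm_num)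
      _ ≤ (m:ℝ) ^ ((1+e)/3) := Real.rpow_le_rpow_of_exponent_le hm1R (by linarith)
  have hN2 : (m:ℝ) ^ ((1+e)/3) ≤ 2 * N := by
    have h := Nat.sub_one_lt_floor ((m:ℝ) ^ ((1+e)/3))
    rw [← hN_def] at h
    linarith
  have hC3 : C * m < ((N * N * N : ℕ) : ℝ) := by
    push_cast
    have h1 : (m:ℝ)^((1:ℝ)+e) = ((m:ℝ)^((1+e)/3))^(3:ℕ) := by
      rw [← Real.rpow_natCast ((m:ℝ)^((1+e)/3)) 3, ← Real.rpow_mul hm0R.le]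
      norm_num
    have h2 : ((m:ℝ)^((1+e)/3))^(3:ℕ) ≤ (2*(N:ℝ))^(3:ℕ) :=
      pow_le_pow_left₀ (by positivity) hN2 3
    have h3 : (m:ℝ)^((1:ℝ)+e) = m * (m:ℝ)^e := by
      rw [Real.rpow_add hm0R, Real.rpow_one]
    have h4 : 8*C + 2 ≤ (m:ℝ)^e := by
      calc 8*C+2 ≤ (q:ℝ)^(e*e) := hqK.le
        _ ≤ (q:ℝ)^e := Real.rpow_le_rpow_of_exponent_le hq1R hee
        _ ≤ (m:ℝ)^e := Real.rpow_le_rpow hq0R.le hmq he0.le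
    have h5 : (m:ℝ) * (8*C+2) ≤ (m:ℝ) * (m:ℝ)^e :=
      mul_le_mul_of_nonneg_left h4 hm0R.le
    have h6 : (2*(N:ℝ))^(3:ℕ) = 8 * ((N:ℝ)*(N:ℝ)*(N:ℝ)) := by ring
    linarith [h1, h2, h3, h5, h6, hm0R]
  -- the missed set
  haveI : NeZero m := ⟨hm_pos.ne'⟩
  have hinj : Set.InjOn (fun j : ℕ => ((j * q : ℕ) : ZMod m)) (Finset.Icc 1 n) := by
    rw [hm_def]; exact inj7 q n hq0
  obtain ⟨T, hT⟩ : ∃ T : Finset (ZMod m),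
      T = (Finset.Icc 1 n).image (fun j : ℕ => ((j * q : ℕ) : ZMod m)) := ⟨_, rfl⟩
  have hTcard : T.card = n := by
    rw [hT, Finset.card_image_of_injOn hinj, Nat.card_Icc]
    omega
  obtain ⟨S, hS⟩ : ∃ S : Set (ZMod m),
      S = {r : ZMod m | r ∉ (Finset.Icc 1 N ×ˢ Finset.Icc 1 N ×ˢ Finset.Icc 1 N).image
        (fun t => ((t.1 * t.2.1 * t.2.2 : ℕ) : ZMod m))} := ⟨_, rfl⟩
  have hsub : ↑T ⊆ S := by
    intro r hr
    rw [hT] at hr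
    simp only [Finset.coe_image, Set.mem_image, Finset.mem_coe, Finset.mem_Icc] at hr
    obtain ⟨j, ⟨hj1, hjn⟩, rfl⟩ := hr
    rw [hS]
    simp only [Set.mem_setOf_eq]
    intro hmem
    obtain ⟨t, htmem, heq⟩ := Finset.mem_image.mp hmem
    simp only [Finset.mem_product, Finset.mem_Icc] at htmem
    obtain ⟨⟨ht11, ht12⟩, ⟨ht21, ht22⟩, ht31, ht32⟩ := htmem
    exact key7 e m q n hm_def hqprime hA j hj1 hjn
      ⟨t.1, t.2.1, t.2.2, ⟨ht11, hxN _ ht12⟩, ⟨ht21, hxN _ ht22⟩, ⟨ht31, hxN _ ht32⟩, heq⟩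
  have hcard : n ≤ S.ncard := by
    calc n = T.card := hTcard.symm
      _ = (↑T : Set (ZMod m)).ncard := (Set.ncard_coe_finset T).symm
      _ ≤ S.ncard := Set.ncard_le_ncard hsub (Set.toFinite S)
  refine ⟨m, ?_, N, N, N, hN_pos, hN_pos, hN_pos, hC3, ?_⟩
  · have h1 : M + 1 ≤ q := le_trans (le_max_left _ _) hqge
    omega
  · calc (m:ℝ) ^ (((2:ℝ) - ε)/3 - ε) ≤ (m:ℝ) ^ ((2-e)/3 - e) :=
        Real.rpow_le_rpow_of_exponent_le hm1R (by linarith)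
      _ < n := hB
      _ ≤ _ := by rw [← hS]; exact_mod_cast hcard
end

section
/- For every ε > 0, the number of 2n-tuples (u₁, …, u_{2n}) of integers in [1, U] satisfying u₁⋯u_n = u_{n+1}⋯u_{2n} is O_{n,ε}(U^(n+ε)). -/
open Finset

lemma per_prime_bound (ε : ℝ) (hε : 0 < ε) (p a : ℕ) (hp : 2 ≤ p) :
    ((a + 1 : ℕ) : ℝ) ≤
      (if (p:ℝ) ^ ε < 2 then max 1 (1/(ε * Real.log 2)) else 1) * (p:ℝ) ^ ((a:ℝ) * ε) := by
  have hp0 : (0:ℝ) ≤ p := by positivity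
  have hp2 : (2:ℝ) ≤ p := by exact_mod_cast hp
  have hεlog : 0 < ε * Real.log 2 := by
    have := Real.log_pos (by norm_num : (1:ℝ) < 2)
    positivity
  split_ifs with h
  · -- small prime case
    set K : ℝ := max 1 (1/(ε * Real.log 2)) with hK
    have hK1 : 1 ≤ K := le_max_left _ _
    have hKε : 1 ≤ K * (ε * Real.log 2) := by
      have : 1/(ε * Real.log 2) ≤ K := le_max_right _ _
      calc (1:ℝ) = (1/(ε * Real.log 2)) * (ε * Real.log 2) := by field_simp
        _ ≤ K * (ε * Real.log 2) := by nlinarith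
    have h1 : 1 + (a:ℝ) * ε * Real.log 2 ≤ (p:ℝ) ^ ((a:ℝ) * ε) := by
      have h2 : (2:ℝ) ^ ((a:ℝ) * ε) ≤ (p:ℝ) ^ ((a:ℝ) * ε) :=
        Real.rpow_le_rpow (by norm_num) hp2 (by positivity)
      have h3 : 1 + ((a:ℝ) * ε) * Real.log 2 ≤ (2:ℝ) ^ ((a:ℝ) * ε) := by
        rw [Real.rpow_def_of_pos (by norm_num)]
        calc 1 + ((a:ℝ) * ε) * Real.log 2 = Real.log 2 * ((a:ℝ)*ε) + 1 := by ring
          _ ≤ Real.exp (Real.log 2 * ((a:ℝ)*ε)) := Real.add_one_le_exp _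
      linarith [h3, h2]
    have key : ((a:ℝ) + 1) ≤ K * (1 + (a:ℝ) * ε * Real.log 2) := by
      have ha : (0:ℝ) ≤ a := Nat.cast_nonneg a
      nlinarith
    have hpow0 : (0:ℝ) ≤ K := by linarith
    calc ((a + 1 : ℕ) : ℝ) = (a:ℝ) + 1 := by push_cast; ring
      _ ≤ K * (1 + (a:ℝ) * ε * Real.log 2) := key
      _ ≤ K * ((p:ℝ) ^ ((a:ℝ) * ε)) := by nlinarith
  · -- big prime case
    push_neg at h
    have h1 : ((a + 1 : ℕ) : ℝ) ≤ (2:ℝ) ^ a := by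
      exact_mod_cast (Nat.lt_two_pow_self (n := a))
    have h2 : (2:ℝ) ^ a ≤ ((p:ℝ) ^ ε) ^ a := pow_le_pow_left₀ (by norm_num) h a
    have h3 : ((p:ℝ) ^ ε) ^ a = (p:ℝ) ^ ((a:ℝ) * ε) := by
      rw [← Real.rpow_natCast ((p:ℝ)^ε) a, ← Real.rpow_mul hp0, mul_comm]
    rw [one_mul]
    calc ((a + 1 : ℕ) : ℝ) ≤ (2:ℝ)^a := h1
      _ ≤ ((p:ℝ) ^ ε) ^ a := h2
      _ = _ := h3

lemma divisor_bound (ε : ℝ) (hε : 0 < ε) :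
    ∃ C : ℝ, 1 ≤ C ∧ ∀ m : ℕ, 0 < m → ((m.divisors.card : ℝ)) ≤ C * (m:ℝ) ^ ε := by
  set K : ℝ := max 1 (1/(ε * Real.log 2)) with hK
  have hK1 : 1 ≤ K := le_max_left _ _
  set N : ℕ := 2 ^ ⌈1/ε⌉₊ with hN
  refine ⟨K ^ N, one_le_pow₀ hK1, ?_⟩
  intro m hm
  have hm0 : m ≠ 0 := hm.ne'
  rw [Nat.card_divisors hm0]
  set supp := m.primeFactors with hsupp
  have hfact : ∀ p ∈ supp, 2 ≤ p := fun p hp => (Nat.prime_of_mem_primeFactors hp).two_le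
  -- the product form of m^ε
  have hmε : (m:ℝ) ^ ε = ∏ p ∈ supp, (p:ℝ) ^ ((m.factorization p : ℝ) * ε) := by
    have h1 : (m:ℝ) = ∏ p ∈ supp, (p:ℝ) ^ (m.factorization p) := by
      conv_lhs => rw [← Nat.factorization_prod_pow_eq_self hm0]
      rw [Nat.prod_factorization_eq_prod_primeFactors]
      push_cast
      rfl
    rw [h1, ← Real.finset_prod_rpow _ _ (fun p hp => by positivity) ε]
    refine Finset.prod_congr rfl fun p hp => ?_
    rw [← Real.rpow_natCast (p:ℝ) (m.factorization p), ← Real.rpow_mul (by positivity)]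
  rw [hmε]
  calc ((supp.prod (m.factorization · + 1) : ℕ) : ℝ)
      = ∏ p ∈ supp, ((m.factorization p + 1 : ℕ) : ℝ) := by push_cast; rfl
    _ ≤ ∏ p ∈ supp, ((if (p:ℝ) ^ ε < 2 then K else 1) * (p:ℝ) ^ ((m.factorization p : ℝ) * ε)) := by
        refine Finset.prod_le_prod (fun p _ => by positivity) fun p hp => ?_
        exact per_prime_bound ε hε p (m.factorization p) (hfact p hp)
    _ = (∏ p ∈ supp, (if (p:ℝ) ^ ε < 2 then K else 1)) *
          ∏ p ∈ supp, (p:ℝ) ^ ((m.factorization p : ℝ) * ε) := Finset.prod_mul_distrib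
    _ ≤ K ^ N * ∏ p ∈ supp, (p:ℝ) ^ ((m.factorization p : ℝ) * ε) := by
        refine mul_le_mul_of_nonneg_right ?_ (Finset.prod_nonneg fun p _ => by positivity)
        rw [Finset.prod_ite, Finset.prod_const, Finset.prod_const, one_pow, mul_one]
        refine pow_le_pow_right₀ hK1 ?_
        have hsub : supp.filter (fun p : ℕ => (p:ℝ) ^ ε < 2) ⊆ Finset.range N := by
          intro p hp
          rw [Finset.mem_filter] at hp
          rw [Finset.mem_range]
          have hp2 : (2:ℕ) ≤ p := hfact p hp.1
          have hplt : (p:ℝ) < (N:ℝ) := by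
            have h1 : (p:ℝ) = ((p:ℝ) ^ ε) ^ (1/ε) := by
              rw [← Real.rpow_mul (by positivity), mul_one_div, div_self hε.ne', Real.rpow_one]
            have h2 : ((p:ℝ) ^ ε) ^ (1/ε) < (2:ℝ) ^ (1/ε) :=
              Real.rpow_lt_rpow (by positivity) hp.2 (by positivity)
            have h3 : (2:ℝ) ^ (1/ε) ≤ (2:ℝ) ^ ((⌈1/ε⌉₊ : ℝ)) :=
              Real.rpow_le_rpow_of_exponent_le (by norm_num) (Nat.le_ceil _)
            have h4 : (2:ℝ) ^ ((⌈1/ε⌉₊ : ℝ)) = (N:ℝ) := by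
              rw [Real.rpow_natCast, hN]; push_cast; ring
            rw [h1]; linarith
          exact_mod_cast hplt
        calc (supp.filter (fun p : ℕ => (p:ℝ) ^ ε < 2)).card ≤ (Finset.range N).card :=
              Finset.card_le_card hsub
          _ = N := Finset.card_range N

/-- The number of 2n-tuples in [1,U] whose first-half product equals the second-half
product is O_{n,ε}(U^(n+ε)). -/
theorem stmt10 :
    ∀ n : ℕ, 0 < n → ∀ ε : ℝ, 0 < ε → ∃ C : ℝ, 0 < C ∧ ∀ U : ℕ, 0 < U →
      ((((Fintype.piFinset fun _ : Fin n => Finset.Icc 1 U) ×ˢ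
         (Fintype.piFinset fun _ : Fin n => Finset.Icc 1 U)).filter
         (fun t => (∏ i, t.1 i) = ∏ i, t.2 i)).card : ℝ)
        ≤ C * (U : ℝ) ^ ((n : ℝ) + ε) := by
  intro n hn ε hε
  have hn0 : (0:ℝ) < n := by exact_mod_cast hn
  set ε' : ℝ := ε / (n * n) with hε'def
  have hε' : 0 < ε' := by positivity
  obtain ⟨C', hC'1, hC'⟩ := divisor_bound ε' hε'
  have hC'0 : (0:ℝ) < C' := lt_of_lt_of_le one_pos hC'1
  refine ⟨C' ^ n, by positivity, ?_⟩
  intro U hU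
  have hU0 : (0:ℝ) < U := by exact_mod_cast hU
  set A := Fintype.piFinset fun _ : Fin n => Finset.Icc 1 U with hA
  have hAcard : A.card = U ^ n := by
    rw [hA, Fintype.card_piFinset]
    simp [Nat.card_Icc]
  have hmemA : ∀ a ∈ A, ∀ i, 1 ≤ a i ∧ a i ≤ U := by
    intro a ha i
    rw [hA, Fintype.mem_piFinset] at ha
    have := ha i
    rw [Finset.mem_Icc] at this
    exact this
  -- decompose the filtered product as a biUnion over the first coordinate
  have hdecomp : ((A ×ˢ A).filter (fun t => (∏ i, t.1 i) = ∏ i, t.2 i)) =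
      A.biUnion (fun a => {a} ×ˢ (A.filter fun b => (∏ i, a i) = ∏ i, b i)) := by
    ext ⟨x, y⟩
    simp only [Finset.mem_filter, Finset.mem_product, Finset.mem_biUnion,
      Finset.mem_singleton]
    constructor
    · rintro ⟨⟨hx, hy⟩, h⟩
      exact ⟨x, hx, rfl, hy, h⟩
    · rintro ⟨a, ha, rfl, hy, h⟩
      exact ⟨⟨ha, hy⟩, h⟩
  -- uniform fiber bound
  set B : ℝ := (C' * (U:ℝ) ^ ((n:ℝ) * ε')) ^ n with hB
  have hfiber : ∀ a ∈ A, (((A.filter fun b => (∏ i, a i) = ∏ i, b i).card : ℝ)) ≤ B := by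
    intro a ha
    set m : ℕ := ∏ i, a i with hm
    have hmpos : 0 < m := Finset.prod_pos fun i _ => (hmemA a ha i).1
    have hmle : m ≤ U ^ n := by
      calc m ≤ ∏ _i : Fin n, U := Finset.prod_le_prod' fun i _ => (hmemA a ha i).2
        _ = U ^ n := by simp
    have hsub : (A.filter fun b => (∏ i, a i) = ∏ i, b i) ⊆
        Fintype.piFinset fun _ : Fin n => m.divisors := by
      intro b hb
      rw [Finset.mem_filter] at hb
      rw [Fintype.mem_piFinset]
      intro i
      rw [Nat.mem_divisors]
      exact ⟨by rw [hm, hb.2]; exact Finset.dvd_prod_of_mem b (Finset.mem_univ i), hmpos.ne'⟩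
    have hcard1 : (A.filter fun b => (∏ i, a i) = ∏ i, b i).card ≤ m.divisors.card ^ n := by
      calc (A.filter fun b => (∏ i, a i) = ∏ i, b i).card
          ≤ (Fintype.piFinset fun _ : Fin n => m.divisors).card := Finset.card_le_card hsub
        _ = m.divisors.card ^ n := by rw [Fintype.card_piFinset]; simp
    have hd : (m.divisors.card : ℝ) ≤ C' * (U:ℝ) ^ ((n:ℝ) * ε') := by
      calc (m.divisors.card : ℝ) ≤ C' * (m:ℝ) ^ ε' := hC' m hmpos
        _ ≤ C' * ((U:ℝ) ^ (n:ℕ)) ^ ε' := by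
            refine mul_le_mul_of_nonneg_left ?_ hC'0.le
            refine Real.rpow_le_rpow (by positivity) ?_ hε'.le
            exact_mod_cast hmle
        _ = C' * (U:ℝ) ^ ((n:ℝ) * ε') := by
            rw [← Real.rpow_natCast (U:ℝ) n, ← Real.rpow_mul hU0.le]
    calc (((A.filter fun b => (∏ i, a i) = ∏ i, b i).card : ℝ))
        ≤ ((m.divisors.card ^ n : ℕ) : ℝ) := by exact_mod_cast hcard1
      _ = ((m.divisors.card : ℝ)) ^ n := by push_cast; ring
      _ ≤ B := by
          rw [hB]
          exact pow_le_pow_left₀ (by positivity) hd n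
  -- put everything together
  have hmain : ((((A ×ˢ A).filter (fun t => (∏ i, t.1 i) = ∏ i, t.2 i)).card : ℝ))
      ≤ (A.card : ℝ) * B := by
    rw [hdecomp]
    calc ((A.biUnion (fun a => {a} ×ˢ (A.filter fun b => (∏ i, a i) = ∏ i, b i))).card : ℝ)
        ≤ ((∑ a ∈ A, ({a} ×ˢ (A.filter fun b => (∏ i, a i) = ∏ i, b i)).card : ℕ) : ℝ) := by
          exact_mod_cast Finset.card_biUnion_le
      _ = ∑ a ∈ A, (((A.filter fun b => (∏ i, a i) = ∏ i, b i).card : ℝ)) := by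
          push_cast
          refine Finset.sum_congr rfl fun a _ => ?_
          rw [Finset.card_product, Finset.card_singleton, one_mul]
      _ ≤ ∑ _a ∈ A, B := Finset.sum_le_sum hfiber
      _ = (A.card : ℝ) * B := by rw [Finset.sum_const, nsmul_eq_mul]
  refine hmain.trans ?_
  have hexp : (n:ℝ) * ε' * n = ε := by
    rw [hε'def]; field_simp
  have hrw : (A.card : ℝ) * B = C' ^ n * (U:ℝ) ^ ((n:ℝ) + ε) := by
    rw [hAcard, hB, mul_pow, ← Real.rpow_natCast ((U:ℝ) ^ ((n:ℝ) * ε')) n,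
      ← Real.rpow_mul hU0.le, hexp]
    push_cast
    rw [← Real.rpow_natCast (U:ℝ) n, Real.rpow_add hU0]
    ring
  rw [hrw]
end

section
/- Let m be a positive integer and N₁, N₂, N₃ positive integers with N₁N₂N₃ > m. Then for every ε > 0, the number I of sextuples (x₁, x₂, x₃, y₁, y₂, y₃) with x_j, y_j ∈ [1, N_j] satisfying x₁x₂x₃ ≡ y₁y₂y₃ (mod m) is O_ε((N₁N₂N₃)² · m^(ε-1)). -/
open Finset

lemma my_two_le_rpow {p : ℕ} {ε : ℝ} (hε : 0 < ε) (hp : (2:ℝ) ^ (1/ε) ≤ p) :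
    (2:ℝ) ≤ (p:ℝ) ^ ε := by
  have h0 : (0:ℝ) ≤ (2:ℝ) ^ (1/ε) := Real.rpow_nonneg (by norm_num) _
  calc (2:ℝ) = ((2:ℝ) ^ (1/ε)) ^ ε := by
        rw [← Real.rpow_mul (by norm_num : (0:ℝ) ≤ 2)]
        rw [one_div, inv_mul_cancel₀ (ne_of_gt hε), Real.rpow_one]
    _ ≤ (p:ℝ) ^ ε := Real.rpow_le_rpow h0 hp hε.le

-- (p^a)^ε as real, p ≥ 2, a ≥ 1 : key factor bounds
lemma my_factor_large {p a : ℕ} {ε : ℝ} (hε : 0 < ε) (hp : (2:ℝ) ^ (1/ε) ≤ p) :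
    ((a:ℝ) + 1) ≤ ((p:ℝ) ^ (a:ℕ)) ^ ε := by
  have h2 : (2:ℝ) ≤ (p:ℝ) ^ ε := my_two_le_rpow hε hp
  have hpnn : (0:ℝ) ≤ p := Nat.cast_nonneg p
  have : ((p:ℝ) ^ (a:ℕ)) ^ ε = ((p:ℝ) ^ ε) ^ (a:ℕ) := by
    rw [← Real.rpow_natCast (p:ℝ) a, ← Real.rpow_mul hpnn, mul_comm,
      Real.rpow_mul hpnn, Real.rpow_natCast]
  rw [this]
  calc ((a:ℝ) + 1) ≤ (2:ℝ) ^ (a:ℕ) := by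
        have := Nat.lt_two_pow_self (n := a)
        have : (a:ℝ) + 1 ≤ ((2^a : ℕ) : ℝ) := by exact_mod_cast this
        simpa using this
    _ ≤ ((p:ℝ) ^ ε) ^ (a:ℕ) := pow_le_pow_left₀ (by norm_num) h2 a

lemma my_factor_small {p a : ℕ} {ε : ℝ} (hε : 0 < ε) (hp : 2 ≤ p) (ha : 1 ≤ a) :
    ((a:ℝ) + 1) ≤ (max 1 (2 / (ε * Real.log 2))) * ((p:ℝ) ^ (a:ℕ)) ^ ε := by
  set K := max 1 (2 / (ε * Real.log 2)) with hK
  have hlog : 0 < Real.log 2 := Real.log_pos (by norm_num)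
  have hεl : 0 < ε * Real.log 2 := mul_pos hε hlog
  have hKge : 2 / (ε * Real.log 2) ≤ K := le_max_right _ _
  -- (p^a)^ε ≥ (2^a)^ε = 2^(aε) ≥ a ε log 2
  have h1 : ((2:ℝ) ^ (a:ℕ)) ^ ε ≤ ((p:ℝ) ^ (a:ℕ)) ^ ε := by
    apply Real.rpow_le_rpow (by positivity) _ hε.le
    exact pow_le_pow_left₀ (by norm_num) (by exact_mod_cast hp) a
  have h2 : (a:ℝ) * (ε * Real.log 2) ≤ ((2:ℝ) ^ (a:ℕ)) ^ ε := by
    have : ((2:ℝ) ^ (a:ℕ)) ^ ε = Real.exp ((a:ℝ) * ε * Real.log 2) := by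
      rw [← Real.rpow_natCast (2:ℝ) a, ← Real.rpow_mul (by norm_num : (0:ℝ) ≤ 2),
        Real.rpow_def_of_pos (by norm_num : (0:ℝ) < 2)]
      ring_nf
    rw [this]
    calc (a:ℝ) * (ε * Real.log 2) ≤ (a:ℝ) * ε * Real.log 2 + 1 := by nlinarith
      _ ≤ Real.exp ((a:ℝ) * ε * Real.log 2) := Real.add_one_le_exp _
  have ha' : (1:ℝ) ≤ (a:ℝ) := by exact_mod_cast ha
  calc ((a:ℝ) + 1) ≤ 2 * (a:ℝ) := by linarith
    _ = (2 / (ε * Real.log 2)) * ((a:ℝ) * (ε * Real.log 2)) := by field_simp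
    _ ≤ K * (((p:ℝ) ^ (a:ℕ)) ^ ε) := by
        exact mul_le_mul hKge (h2.trans h1) (by positivity) (by positivity)
        
lemma my_divisor_bound (ε : ℝ) (hε : 0 < ε) :
    ∃ C : ℝ, 1 ≤ C ∧ ∀ n : ℕ, n ≠ 0 → (n.divisors.card : ℝ) ≤ C * (n : ℝ) ^ ε := by
  set B : ℕ := ⌈(2:ℝ) ^ (1/ε)⌉₊ with hB
  set K : ℝ := max 1 (2 / (ε * Real.log 2)) with hKdef
  have hK1 : (1:ℝ) ≤ K := le_max_left _ _
  have hK0 : (0:ℝ) ≤ K := le_trans zero_le_one hK1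
  refine ⟨K ^ (B+1), one_le_pow₀ hK1, ?_⟩
  intro n hn
  have hcard := Nat.card_divisors hn
  -- n as product over primeFactors
  have hnprod : (n:ℝ) = ∏ p ∈ n.primeFactors, ((p:ℝ) ^ (n.factorization p)) := by
    conv_lhs => rw [← Nat.factorization_prod_pow_eq_self hn]
    rw [Finsupp.prod, Nat.support_factorization]
    push_cast
    rfl
  have hrw : (n:ℝ) ^ ε = ∏ p ∈ n.primeFactors, ((p:ℝ) ^ (n.factorization p)) ^ ε := by
    rw [hnprod, ← Real.finset_prod_rpow _ _ (fun i _ => by positivity) ε]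
  have hfac : ∀ p ∈ n.primeFactors,
      ((n.factorization p : ℝ) + 1) ≤
        (if p ≤ B then K else 1) * ((p:ℝ) ^ (n.factorization p)) ^ ε := by
    intro p hp
    have hpp : p.Prime := Nat.prime_of_mem_primeFactors hp
    have ha : 1 ≤ n.factorization p := (Nat.Prime.factorization_pos_of_dvd hpp hn
      (Nat.dvd_of_mem_primeFactors hp))
    by_cases hcase : p ≤ B
    · simp only [hcase, if_true]
      exact my_factor_small hε hpp.two_le ha
    · simp only [hcase, if_false, one_mul]
      apply my_factor_large hε
      have : B < p := not_le.mp hcase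
      calc (2:ℝ) ^ (1/ε) ≤ (B:ℝ) := Nat.le_ceil _
        _ ≤ (p:ℝ) := by exact_mod_cast this.le
  calc ((n.divisors.card : ℝ))
      = ∏ p ∈ n.primeFactors, ((n.factorization p : ℝ) + 1) := by
        rw [hcard]; push_cast; rfl
    _ ≤ ∏ p ∈ n.primeFactors, ((if p ≤ B then K else 1) * ((p:ℝ) ^ (n.factorization p)) ^ ε) := by
        apply Finset.prod_le_prod (fun i _ => by positivity) hfac
    _ = (∏ p ∈ n.primeFactors, (if p ≤ B then K else 1)) *
          ∏ p ∈ n.primeFactors, ((p:ℝ) ^ (n.factorization p)) ^ ε := Finset.prod_mul_distrib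
    _ ≤ K ^ (B+1) * (n:ℝ) ^ ε := by
        rw [← hrw]
        apply mul_le_mul_of_nonneg_right _ (by positivity)
        rw [Finset.prod_ite _ _]
        rw [Finset.prod_const, Finset.prod_const, one_pow, mul_one]
        apply pow_le_pow_right₀ hK1
        calc (n.primeFactors.filter (fun p => p ≤ B)).card
            ≤ (Finset.range (B+1)).card := Finset.card_le_card (by
              intro x hx
              simp only [Finset.mem_filter] at hx
              simp [Nat.lt_succ_iff, hx.2])
          _ = B + 1 := Finset.card_range _

lemma my_rep_le (A B C v : ℕ) (hv : v ≠ 0) :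
    ((Finset.Icc 1 A ×ˢ Finset.Icc 1 B ×ˢ Finset.Icc 1 C).filter
      (fun y : ℕ×ℕ×ℕ => y.1 * y.2.1 * y.2.2 = v)).card ≤ v.divisors.card ^ 2 := by
  have h := Finset.card_le_card_of_injOn (fun y : ℕ×ℕ×ℕ => (y.1, y.2.1))
    (s := (Finset.Icc 1 A ×ˢ Finset.Icc 1 B ×ˢ Finset.Icc 1 C).filter
      (fun y : ℕ×ℕ×ℕ => y.1 * y.2.1 * y.2.2 = v))
    (t := v.divisors ×ˢ v.divisors) ?_ ?_
  · simpa [Finset.card_product, sq] using h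
  · rintro ⟨y1, y2, y3⟩ hy
    simp only [Finset.mem_coe, Finset.mem_filter] at hy
    have hprod : y1 * y2 * y3 = v := hy.2
    simp only [Finset.mem_coe, Finset.mem_product, Nat.mem_divisors]
    exact ⟨⟨⟨y2 * y3, by rw [← hprod]; ring⟩, hv⟩, ⟨⟨y1 * y3, by rw [← hprod]; ring⟩, hv⟩⟩
  · rintro ⟨a1, a2, a3⟩ ha ⟨b1, b2, b3⟩ hb hab
    simp only [Finset.coe_filter, Set.mem_setOf_eq] at ha hb
    simp only [Prod.mk.injEq] at hab
    obtain ⟨h1, h2⟩ := hab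
    subst h1; subst h2
    have hA : a1 * a2 * a3 = v := ha.2
    have hB : a1 * a2 * b3 = v := hb.2
    have hpos : 0 < a1 * a2 := by
      rcases Nat.eq_zero_or_pos (a1 * a2) with h0 | h0
      · exfalso; apply hv; rw [← hA, h0, zero_mul]
      · exact h0
    have h3 : a3 = b3 := Nat.eq_of_mul_eq_mul_left hpos (hA.trans hB.symm)
    simp [h3]

def σf (Nj m x : ℕ) : ℕ := if Nj ≤ m then x else (x-1) % m + 1
def κf (Nj m x : ℕ) : ℕ := if Nj ≤ m then 0 else (x-1)/m

lemma my_coord {m Nj x : ℕ} (hm : 0 < m) (hx : x ∈ Finset.Icc 1 Nj) :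
    σf Nj m x ∈ Finset.Icc 1 (min Nj m) ∧ κf Nj m x < (Nj-1)/m + 1 ∧
    x ≡ σf Nj m x [MOD m] ∧
    (if Nj ≤ m then σf Nj m x else κf Nj m x * m + σf Nj m x) = x := by
  simp only [Finset.mem_Icc] at hx
  by_cases h : Nj ≤ m
  · refine ⟨?_, ?_, ?_, ?_⟩
    · simp only [σf, h, if_true, Finset.mem_Icc]
      omega
    · simp only [κf, h, if_true]
      exact Nat.succ_pos _
    · simp only [σf, h, if_true]
      exact Nat.ModEq.refl _
    · simp only [σf, h, if_true]
  · simp only [σf, κf, h, if_false]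
    have hdm := Nat.div_add_mod (x-1) m
    have hrec : (x-1)/m * m + ((x-1) % m + 1) = x := by
      rw [mul_comm ((x-1)/m) m]; omega
    refine ⟨?_, ?_, ?_, hrec⟩
    · simp only [Finset.mem_Icc]
      have := Nat.mod_lt (x-1) hm
      omega
    · have : (x-1)/m ≤ (Nj-1)/m := Nat.div_le_div_right (by omega)
      omega
    · have hz : (x : ZMod m) = (((x-1) % m + 1 : ℕ) : ZMod m) := by
        conv_lhs => rw [← hrec]
        push_cast
        simp
      exact (ZMod.natCast_eq_natCast_iff _ _ _).mp hz

lemma my_coord_inj {m Nj x x' : ℕ} (hm : 0 < m) (hx : x ∈ Finset.Icc 1 Nj)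
    (hx' : x' ∈ Finset.Icc 1 Nj) (hσ : σf Nj m x = σf Nj m x') (hκ : κf Nj m x = κf Nj m x') :
    x = x' := by
  have h1 := (my_coord hm hx).2.2.2
  have h2 := (my_coord hm hx').2.2.2
  rw [← h1, ← h2, hσ, hκ]
lemma my_stepA (m N₁ N₂ N₃ : ℕ) (hm : 0 < m) :
    (((Finset.Icc 1 N₁ ×ˢ Finset.Icc 1 N₂ ×ˢ Finset.Icc 1 N₃) ×ˢ
        (Finset.Icc 1 N₁ ×ˢ Finset.Icc 1 N₂ ×ˢ Finset.Icc 1 N₃)).filter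
        (fun t => ((t.1.1 * t.1.2.1 * t.1.2.2 : ℕ) : ZMod m)
            = ((t.2.1 * t.2.2.1 * t.2.2.2 : ℕ) : ZMod m))).card ≤
    (((Finset.Icc 1 (min N₁ m) ×ˢ Finset.Icc 1 (min N₂ m) ×ˢ Finset.Icc 1 (min N₃ m)) ×ˢ
        (Finset.Icc 1 (min N₁ m) ×ˢ Finset.Icc 1 (min N₂ m) ×ˢ Finset.Icc 1 (min N₃ m))).filter
        (fun t => ((t.1.1 * t.1.2.1 * t.1.2.2 : ℕ) : ZMod m)
            = ((t.2.1 * t.2.2.1 * t.2.2.2 : ℕ) : ZMod m))).card *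
      (((N₁-1)/m+1) * ((N₂-1)/m+1) * ((N₃-1)/m+1))^2 := by
  classical
  set K₁ := (N₁-1)/m+1
  set K₂ := (N₂-1)/m+1
  set K₃ := (N₃-1)/m+1
  have hT : (0:ℕ) = 0 := rfl
  have h := Finset.card_le_card_of_injOn
    (fun a : (ℕ×ℕ×ℕ)×(ℕ×ℕ×ℕ) =>
      (((σf N₁ m a.1.1, σf N₂ m a.1.2.1, σf N₃ m a.1.2.2),
        (σf N₁ m a.2.1, σf N₂ m a.2.2.1, σf N₃ m a.2.2.2)),
       ((κf N₁ m a.1.1, κf N₂ m a.1.2.1, κf N₃ m a.1.2.2),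
        (κf N₁ m a.2.1, κf N₂ m a.2.2.1, κf N₃ m a.2.2.2))))
    (s := (((Finset.Icc 1 N₁ ×ˢ Finset.Icc 1 N₂ ×ˢ Finset.Icc 1 N₃) ×ˢ
        (Finset.Icc 1 N₁ ×ˢ Finset.Icc 1 N₂ ×ˢ Finset.Icc 1 N₃)).filter
        (fun t => ((t.1.1 * t.1.2.1 * t.1.2.2 : ℕ) : ZMod m)
            = ((t.2.1 * t.2.2.1 * t.2.2.2 : ℕ) : ZMod m))))
    (t := (((Finset.Icc 1 (min N₁ m) ×ˢ Finset.Icc 1 (min N₂ m) ×ˢ Finset.Icc 1 (min N₃ m)) ×ˢ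
        (Finset.Icc 1 (min N₁ m) ×ˢ Finset.Icc 1 (min N₂ m) ×ˢ Finset.Icc 1 (min N₃ m))).filter
        (fun t => ((t.1.1 * t.1.2.1 * t.1.2.2 : ℕ) : ZMod m)
            = ((t.2.1 * t.2.2.1 * t.2.2.2 : ℕ) : ZMod m))) ×ˢ ((Finset.range K₁ ×ˢ Finset.range K₂ ×ˢ Finset.range K₃) ×ˢ
        (Finset.range K₁ ×ˢ Finset.range K₂ ×ˢ Finset.range K₃))) ?_ ?_
  · refine h.trans (le_of_eq ?_)
    simp only [Finset.card_product, Finset.card_range]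
    ring
  · rintro ⟨⟨x1, x2, x3⟩, ⟨y1, y2, y3⟩⟩ ha
    simp only [Finset.mem_coe, Finset.mem_filter, Finset.mem_product] at ha
    obtain ⟨⟨⟨hx1, hx2, hx3⟩, ⟨hy1, hy2, hy3⟩⟩, hcond⟩ := ha
    have c1 := my_coord (Nj := N₁) hm hx1
    have c2 := my_coord (Nj := N₂) hm hx2
    have c3 := my_coord (Nj := N₃) hm hx3
    have d1 := my_coord (Nj := N₁) hm hy1
    have d2 := my_coord (Nj := N₂) hm hy2
    have d3 := my_coord (Nj := N₃) hm hy3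
    simp only [Finset.mem_coe, Finset.mem_product, Finset.mem_filter, Finset.mem_range]
    refine ⟨⟨⟨⟨c1.1, c2.1, c3.1⟩, ⟨d1.1, d2.1, d3.1⟩⟩, ?_⟩,
      ⟨⟨c1.2.1, c2.2.1, c3.2.1⟩, ⟨d1.2.1, d2.2.1, d3.2.1⟩⟩⟩
    have hx : (x1 * x2 * x3) ≡ (σf N₁ m x1 * σf N₂ m x2 * σf N₃ m x3) [MOD m] :=
      Nat.ModEq.mul (Nat.ModEq.mul c1.2.2.1 c2.2.2.1) c3.2.2.1
    have hy : (y1 * y2 * y3) ≡ (σf N₁ m y1 * σf N₂ m y2 * σf N₃ m y3) [MOD m] :=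
      Nat.ModEq.mul (Nat.ModEq.mul d1.2.2.1 d2.2.2.1) d3.2.2.1
    calc ((σf N₁ m x1 * σf N₂ m x2 * σf N₃ m x3 : ℕ) : ZMod m)
        = ((x1 * x2 * x3 : ℕ) : ZMod m) := ((ZMod.natCast_eq_natCast_iff _ _ _).mpr hx).symm
      _ = ((y1 * y2 * y3 : ℕ) : ZMod m) := hcond
      _ = ((σf N₁ m y1 * σf N₂ m y2 * σf N₃ m y3 : ℕ) : ZMod m) :=
          (ZMod.natCast_eq_natCast_iff _ _ _).mpr hy
  · rintro ⟨⟨x1, x2, x3⟩, ⟨y1, y2, y3⟩⟩ ha ⟨⟨x1', x2', x3'⟩, ⟨y1', y2', y3'⟩⟩ hb hab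
    simp only [Finset.coe_filter, Set.mem_setOf_eq, Finset.mem_product] at ha hb
    obtain ⟨⟨⟨hx1, hx2, hx3⟩, ⟨hy1, hy2, hy3⟩⟩, -⟩ := ha
    obtain ⟨⟨⟨hx1', hx2', hx3'⟩, ⟨hy1', hy2', hy3'⟩⟩, -⟩ := hb
    simp only [Prod.mk.injEq] at hab ⊢
    obtain ⟨⟨⟨e1, e2, e3⟩, ⟨e4, e5, e6⟩⟩, ⟨⟨f1, f2, f3⟩, ⟨f4, f5, f6⟩⟩⟩ := hab
    exact ⟨⟨my_coord_inj hm hx1 hx1' e1 f1, my_coord_inj hm hx2 hx2' e2 f2,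
        my_coord_inj hm hx3 hx3' e3 f3⟩,
      ⟨my_coord_inj hm hy1 hy1' e4 f4, my_coord_inj hm hy2 hy2' e5 f5,
        my_coord_inj hm hy3 hy3' e6 f6⟩⟩
lemma my_stepB (m A B C : ℕ) (hm : 0 < m) (hA : 0 < A) (hB : 0 < B) (hC : 0 < C)
    (D : ℝ) (hD : ∀ v : ℕ, 1 ≤ v → v ≤ A * B * C → ((v.divisors.card : ℝ) ^ 2) ≤ D)
    (hD0 : 0 ≤ D) :
    (((((Finset.Icc 1 A ×ˢ Finset.Icc 1 B ×ˢ Finset.Icc 1 C) ×ˢ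
        (Finset.Icc 1 A ×ˢ Finset.Icc 1 B ×ˢ Finset.Icc 1 C)).filter
        (fun t => ((t.1.1 * t.1.2.1 * t.1.2.2 : ℕ) : ZMod m)
            = ((t.2.1 * t.2.2.1 * t.2.2.2 : ℕ) : ZMod m))).card : ℝ)) ≤
      ((A * B * C) * ((A * B * C) / m + 1) : ℕ) * D := by
  classical
  set Bx := Finset.Icc 1 A ×ˢ Finset.Icc 1 B ×ˢ Finset.Icc 1 C with hBx
  set T := ((Bx ×ˢ Bx).filter
        (fun t => ((t.1.1 * t.1.2.1 * t.1.2.2 : ℕ) : ZMod m)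
            = ((t.2.1 * t.2.2.1 * t.2.2.2 : ℕ) : ZMod m))) with hTdef
  have hPbound : ∀ y : ℕ×ℕ×ℕ, y ∈ Bx → y.1 * y.2.1 * y.2.2 ≤ A * B * C := by
    rintro ⟨y1, y2, y3⟩ hy
    simp only [hBx, Finset.mem_product, Finset.mem_Icc] at hy
    exact Nat.mul_le_mul (Nat.mul_le_mul hy.1.2 hy.2.1.2) hy.2.2.2
  have hmapsto : ∀ a : (ℕ×ℕ×ℕ)×(ℕ×ℕ×ℕ), a ∈ T →
      (a.1, (a.2.1 * a.2.2.1 * a.2.2.2) / m) ∈ Bx ×ˢ Finset.range ((A * B * C) / m + 1) := by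
    intro a ha
    simp only [hTdef, Finset.mem_filter, Finset.mem_product] at ha
    simp only [Finset.mem_product, Finset.mem_range]
    refine ⟨ha.1.1, ?_⟩
    have := Nat.div_le_div_right (c := m) (hPbound a.2 ha.1.2)
    omega
  have hsum := Finset.card_eq_sum_card_fiberwise hmapsto
  -- bound each fiber
  have hfiber : ∀ b ∈ Bx ×ˢ Finset.range ((A * B * C) / m + 1),
      ((T.filter (fun a => (a.1, (a.2.1 * a.2.2.1 * a.2.2.2) / m) = b)).card : ℝ) ≤ D := by
    rintro ⟨x, t⟩ hb
    set v := t * m + (x.1 * x.2.1 * x.2.2) % m with hv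
    by_cases hne : (T.filter (fun a => (a.1, (a.2.1 * a.2.2.1 * a.2.2.2) / m) = (x, t))).Nonempty
    · obtain ⟨a₀, ha₀⟩ := hne
      have hval : ∀ a ∈ T.filter (fun a => (a.1, (a.2.1 * a.2.2.1 * a.2.2.2) / m) = (x, t)),
          a.2.1 * a.2.2.1 * a.2.2.2 = v := by
        intro a ha
        simp only [Finset.mem_filter, hTdef, Finset.mem_product, Prod.mk.injEq] at ha
        obtain ⟨⟨-, hcond⟩, hax, hat⟩ := ha
        have hmod : (a.1.1 * a.1.2.1 * a.1.2.2) % m = (a.2.1 * a.2.2.1 * a.2.2.2) % m :=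
          (ZMod.natCast_eq_natCast_iff _ _ _).mp hcond
        have hdm := Nat.div_add_mod (a.2.1 * a.2.2.1 * a.2.2.2) m
        rw [hv, ← hat, ← hax, hmod, mul_comm (a.2.1 * a.2.2.1 * a.2.2.2 / m) m]
        omega
      -- v ≠ 0 and v ≤ A*B*C
      have ha₀' := ha₀
      simp only [Finset.mem_filter, hTdef, Finset.mem_product] at ha₀'
      have hv1 : 1 ≤ v := by
        rw [← hval a₀ ha₀]
        have hy := ha₀'.1.1.2
        simp only [hBx, Finset.mem_product, Finset.mem_Icc] at hy
        have := Nat.mul_le_mul (Nat.mul_le_mul hy.1.1 hy.2.1.1) hy.2.2.1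
        simpa using this
      have hv2 : v ≤ A * B * C := by
        rw [← hval a₀ ha₀]; exact hPbound _ ha₀'.1.1.2
      -- inject fiber into y-triples with product v
      have hinj := Finset.card_le_card_of_injOn (fun a : (ℕ×ℕ×ℕ)×(ℕ×ℕ×ℕ) => a.2)
        (s := T.filter (fun a => (a.1, (a.2.1 * a.2.2.1 * a.2.2.2) / m) = (x, t)))
        (t := Bx.filter (fun y : ℕ×ℕ×ℕ => y.1 * y.2.1 * y.2.2 = v)) ?_ ?_
      · calc ((T.filter (fun a => (a.1, (a.2.1 * a.2.2.1 * a.2.2.2) / m) = (x, t))).card : ℝ)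
            ≤ ((Bx.filter (fun y : ℕ×ℕ×ℕ => y.1 * y.2.1 * y.2.2 = v)).card : ℝ) := by
              exact_mod_cast hinj
          _ ≤ ((v.divisors.card : ℝ) ^ 2) := by
              have := my_rep_le A B C v (by omega)
              exact_mod_cast this
          _ ≤ D := hD v hv1 hv2
      · intro a ha
        have hav := hval a ha
        simp only [Finset.mem_coe, Finset.mem_filter, hTdef, Finset.mem_product] at ha
        simp only [Finset.mem_coe, Finset.mem_filter]
        exact ⟨ha.1.1.2, hav⟩
      · intro a ha a' ha' haa
        simp only [Finset.coe_filter, Set.mem_setOf_eq, Prod.mk.injEq] at ha ha'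
        have : a.1 = a'.1 := by rw [ha.2.1, ha'.2.1]
        exact Prod.ext this haa
    · rw [Finset.not_nonempty_iff_eq_empty] at hne
      rw [hne]
      simpa using hD0
  calc (T.card : ℝ) = ∑ b ∈ Bx ×ˢ Finset.range ((A * B * C) / m + 1),
        ((T.filter (fun a => (a.1, (a.2.1 * a.2.2.1 * a.2.2.2) / m) = b)).card : ℝ) := by
        rw [hsum]; push_cast; rfl
    _ ≤ ∑ _b ∈ Bx ×ˢ Finset.range ((A * B * C) / m + 1), D := Finset.sum_le_sum hfiber
    _ = ((Bx ×ˢ Finset.range ((A * B * C) / m + 1)).card : ℝ) * D := by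
        rw [Finset.sum_const, nsmul_eq_mul]
    _ = ((A * B * C) * ((A * B * C) / m + 1) : ℕ) * D := by
        congr 1
        simp only [hBx, Finset.card_product, Finset.card_range, Nat.card_Icc]
        push_cast
        ring

/-- If N₁N₂N₃ > m then the number of sextuples with x₁x₂x₃ ≡ y₁y₂y₃ (mod m),
xⱼ,yⱼ ∈ [1,Nⱼ], is O_ε((N₁N₂N₃)² m^(ε-1)). -/
theorem stmt11 :
    ∀ ε : ℝ, 0 < ε → ∃ C : ℝ, 0 < C ∧ ∀ m N₁ N₂ N₃ : ℕ, 0 < m →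
      0 < N₁ → 0 < N₂ → 0 < N₃ → m < N₁ * N₂ * N₃ →
      ((((Finset.Icc 1 N₁ ×ˢ Finset.Icc 1 N₂ ×ˢ Finset.Icc 1 N₃) ×ˢ
          (Finset.Icc 1 N₁ ×ˢ Finset.Icc 1 N₂ ×ˢ Finset.Icc 1 N₃)).filter
          (fun t => ((t.1.1 * t.1.2.1 * t.1.2.2 : ℕ) : ZMod m)
              = ((t.2.1 * t.2.2.1 * t.2.2.2 : ℕ) : ZMod m))).card : ℝ)
        ≤ C * ((N₁ * N₂ * N₃ : ℕ) : ℝ) ^ 2 * (m : ℝ) ^ (ε - 1) := by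
  intro ε hε
  obtain ⟨C₀, hC₀, hd⟩ := my_divisor_bound (ε/6) (by positivity)
  refine ⟨128 * C₀^2, by positivity, ?_⟩
  intro m N₁ N₂ N₃ hm hN₁ hN₂ hN₃ hmN
  have hM0 : (0:ℝ) < m := by exact_mod_cast hm
  set A := min N₁ m with hAdef
  set B := min N₂ m with hBdef
  set Cc := min N₃ m with hCdef
  have hA1 : 0 < A := lt_min hN₁ hm
  have hB1 : 0 < B := lt_min hN₂ hm
  have hC1 : 0 < Cc := lt_min hN₃ hm
  have hAm : A ≤ m := min_le_right _ _
  have hBm : B ≤ m := min_le_right _ _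
  have hCm : Cc ≤ m := min_le_right _ _
  -- m ≤ A * B * Cc
  have hABCm : m ≤ A * B * Cc := by
    rcases lt_or_ge m N₁ with h1 | h1
    · have e : A = m := min_eq_right h1.le
      calc m = m*1*1 := by ring
        _ ≤ m*B*Cc := Nat.mul_le_mul (Nat.mul_le_mul le_rfl hB1) hC1
        _ = A*B*Cc := by rw [e]
    · rcases lt_or_ge m N₂ with h2 | h2
      · have e : B = m := min_eq_right h2.le
        calc m = 1*m*1 := by ring
          _ ≤ A*m*Cc := Nat.mul_le_mul (Nat.mul_le_mul hA1 le_rfl) hC1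
          _ = A*B*Cc := by rw [e]
      · rcases lt_or_ge m N₃ with h3 | h3
        · have e : Cc = m := min_eq_right h3.le
          calc m = 1*1*m := by ring
            _ ≤ A*B*m := Nat.mul_le_mul (Nat.mul_le_mul hA1 hB1) le_rfl
            _ = A*B*Cc := by rw [e]
        · have e1 : A = N₁ := min_eq_left h1
          have e2 : B = N₂ := min_eq_left h2
          have e3 : Cc = N₃ := min_eq_left h3
          rw [e1, e2, e3]
          exact hmN.le
  -- divisor bound for v ≤ A*B*Cc ≤ m³
  have hD : ∀ v : ℕ, 1 ≤ v → v ≤ A * B * Cc → ((v.divisors.card : ℝ) ^ 2) ≤ C₀^2 * (m:ℝ)^ε := by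
    intro v hv1 hv2
    have hvm : v ≤ m^3 := le_trans hv2 (by
      calc A * B * Cc ≤ m * m * m := Nat.mul_le_mul (Nat.mul_le_mul hAm hBm) hCm
        _ = m^3 := by ring)
    have hb1 : (v.divisors.card : ℝ) ≤ C₀ * (v:ℝ)^(ε/6) := hd v (by omega)
    have hb2 : (v:ℝ)^(ε/6) ≤ (m:ℝ)^(ε/2) := by
      calc (v:ℝ)^(ε/6) ≤ ((m:ℝ)^(3:ℕ))^(ε/6) := by
            apply Real.rpow_le_rpow (Nat.cast_nonneg v) _ (by positivity)
            exact_mod_cast hvm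
        _ = (m:ℝ)^(ε/2) := by
            rw [← Real.rpow_natCast (m:ℝ) 3, ← Real.rpow_mul (Nat.cast_nonneg m)]
            congr 1
            push_cast
            ring
    have hb : (v.divisors.card : ℝ) ≤ C₀ * (m:ℝ)^(ε/2) := by
      refine hb1.trans (mul_le_mul_of_nonneg_left hb2 (by linarith))
    calc ((v.divisors.card : ℝ))^2 ≤ (C₀ * (m:ℝ)^(ε/2))^2 := by
          apply pow_le_pow_left₀ (Nat.cast_nonneg _) hb
      _ = C₀^2 * ((m:ℝ)^(ε/2) * (m:ℝ)^(ε/2)) := by ring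
      _ = C₀^2 * (m:ℝ)^ε := by
          rw [← Real.rpow_add hM0]
          norm_num
  have h1 := my_stepA m N₁ N₂ N₃ hm
  have h2 := my_stepB m A B Cc hm hA1 hB1 hC1 (C₀^2 * (m:ℝ)^ε) hD (by positivity)
  -- real versions
  have hKK : ∀ (Nj : ℕ), 0 < Nj → (((Nj-1)/m + 1 : ℕ) : ℝ) ≤ 2 * (Nj:ℝ) / ((min Nj m : ℕ):ℝ) := by
    intro Nj hNj
    rcases le_or_gt Nj m with h | h
    · have e0 : (Nj-1)/m = 0 := Nat.div_eq_of_lt (by omega)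
      have e1 : min Nj m = Nj := min_eq_left h
      rw [e0, e1]
      have hNj0 : (0:ℝ) < (Nj:ℝ) := by exact_mod_cast hNj
      have : (2:ℝ) * Nj / Nj = 2 := by field_simp
      rw [this]
      norm_num
    · have hmin : min Nj m = m := min_eq_right h.le
      rw [hmin]
      have l1 : (Nj-1)/m ≤ Nj/m := Nat.div_le_div_right (by omega)
      have l2 : 1 ≤ Nj/m := (Nat.one_le_div_iff hm).mpr h.le
      calc (((Nj-1)/m + 1 : ℕ) : ℝ) ≤ ((Nj/m + Nj/m : ℕ):ℝ) := by exact_mod_cast by omega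
        _ = 2 * ((Nj/m : ℕ):ℝ) := by push_cast; ring
        _ ≤ 2 * ((Nj:ℝ)/(m:ℝ)) := by
            have := Nat.cast_div_le (α := ℝ) (m := Nj) (n := m)
            linarith
        _ = 2 * (Nj:ℝ) / (m:ℝ) := by ring
  have hq : (((A*B*Cc)/m + 1 : ℕ) : ℝ) ≤ 2 * ((A:ℝ)*(B:ℝ)*(Cc:ℝ)) / (m:ℝ) := by
    have l2 : 1 ≤ (A*B*Cc)/m := (Nat.one_le_div_iff hm).mpr hABCm
    calc (((A*B*Cc)/m + 1 : ℕ) : ℝ) ≤ (((A*B*Cc)/m + (A*B*Cc)/m : ℕ):ℝ) := by exact_mod_cast by omega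
      _ = 2 * (((A*B*Cc)/m : ℕ):ℝ) := by push_cast; ring
      _ ≤ 2 * (((A*B*Cc:ℕ):ℝ)/(m:ℝ)) := by
          have := Nat.cast_div_le (α := ℝ) (m := A*B*Cc) (n := m)
          linarith
      _ = 2 * ((A:ℝ)*(B:ℝ)*(Cc:ℝ)) / (m:ℝ) := by push_cast; ring
  -- cast step A
  have h1R : ((((Finset.Icc 1 N₁ ×ˢ Finset.Icc 1 N₂ ×ˢ Finset.Icc 1 N₃) ×ˢ
          (Finset.Icc 1 N₁ ×ˢ Finset.Icc 1 N₂ ×ˢ Finset.Icc 1 N₃)).filter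
          (fun t => ((t.1.1 * t.1.2.1 * t.1.2.2 : ℕ) : ZMod m)
              = ((t.2.1 * t.2.2.1 * t.2.2.2 : ℕ) : ZMod m))).card : ℝ) ≤
      ((((Finset.Icc 1 A ×ˢ Finset.Icc 1 B ×ˢ Finset.Icc 1 Cc) ×ˢ
          (Finset.Icc 1 A ×ˢ Finset.Icc 1 B ×ˢ Finset.Icc 1 Cc)).filter
          (fun t => ((t.1.1 * t.1.2.1 * t.1.2.2 : ℕ) : ZMod m)
              = ((t.2.1 * t.2.2.1 * t.2.2.2 : ℕ) : ZMod m))).card : ℝ) *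
        ((((N₁-1)/m+1 : ℕ):ℝ) * (((N₂-1)/m+1 : ℕ):ℝ) * (((N₃-1)/m+1 : ℕ):ℝ))^2 := by
    have := (Nat.cast_le (α := ℝ)).mpr h1
    push_cast at this ⊢
    convert this using 2
  have hcardT0 : (0:ℝ) ≤ ((((Finset.Icc 1 A ×ˢ Finset.Icc 1 B ×ˢ Finset.Icc 1 Cc) ×ˢ
          (Finset.Icc 1 A ×ˢ Finset.Icc 1 B ×ˢ Finset.Icc 1 Cc)).filter
          (fun t => ((t.1.1 * t.1.2.1 * t.1.2.2 : ℕ) : ZMod m)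
              = ((t.2.1 * t.2.2.1 * t.2.2.2 : ℕ) : ZMod m))).card : ℝ) := Nat.cast_nonneg _
  -- combine
  have hKprod : ((((N₁-1)/m+1 : ℕ):ℝ) * (((N₂-1)/m+1 : ℕ):ℝ) * (((N₃-1)/m+1 : ℕ):ℝ)) ≤
      (2 * (N₁:ℝ) / (A:ℝ)) * (2 * (N₂:ℝ) / (B:ℝ)) * (2 * (N₃:ℝ) / (Cc:ℝ)) := by
    have k1 := hKK N₁ hN₁
    have k2 := hKK N₂ hN₂
    have k3 := hKK N₃ hN₃
    rw [hAdef, hBdef, hCdef]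
    apply mul_le_mul (mul_le_mul k1 k2 (Nat.cast_nonneg _) (by positivity))
      k3 (Nat.cast_nonneg _) (by positivity)
  have hA0R : (0:ℝ) < (A:ℝ) := by exact_mod_cast hA1
  have hB0R : (0:ℝ) < (B:ℝ) := by exact_mod_cast hB1
  have hC0R : (0:ℝ) < (Cc:ℝ) := by exact_mod_cast hC1
  have h2R : ((((Finset.Icc 1 A ×ˢ Finset.Icc 1 B ×ˢ Finset.Icc 1 Cc) ×ˢ
          (Finset.Icc 1 A ×ˢ Finset.Icc 1 B ×ˢ Finset.Icc 1 Cc)).filter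
          (fun t => ((t.1.1 * t.1.2.1 * t.1.2.2 : ℕ) : ZMod m)
              = ((t.2.1 * t.2.2.1 * t.2.2.2 : ℕ) : ZMod m))).card : ℝ) ≤
      ((A:ℝ)*(B:ℝ)*(Cc:ℝ)) * (2 * ((A:ℝ)*(B:ℝ)*(Cc:ℝ)) / (m:ℝ)) * (C₀^2 * (m:ℝ)^ε) := by
    refine h2.trans ?_
    have e : (((A * B * Cc) * ((A * B * Cc) / m + 1) : ℕ) : ℝ) =
        ((A:ℝ)*(B:ℝ)*(Cc:ℝ)) * ((((A*B*Cc)/m + 1 : ℕ)):ℝ) := by push_cast; ring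
    rw [e]
    apply mul_le_mul_of_nonneg_right _ (by positivity)
    exact mul_le_mul_of_nonneg_left hq (by positivity)
  calc ((((Finset.Icc 1 N₁ ×ˢ Finset.Icc 1 N₂ ×ˢ Finset.Icc 1 N₃) ×ˢ
          (Finset.Icc 1 N₁ ×ˢ Finset.Icc 1 N₂ ×ˢ Finset.Icc 1 N₃)).filter
          (fun t => ((t.1.1 * t.1.2.1 * t.1.2.2 : ℕ) : ZMod m)
              = ((t.2.1 * t.2.2.1 * t.2.2.2 : ℕ) : ZMod m))).card : ℝ)
      ≤ (((A:ℝ)*(B:ℝ)*(Cc:ℝ)) * (2 * ((A:ℝ)*(B:ℝ)*(Cc:ℝ)) / (m:ℝ)) * (C₀^2 * (m:ℝ)^ε)) *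
          ((2 * (N₁:ℝ) / (A:ℝ)) * (2 * (N₂:ℝ) / (B:ℝ)) * (2 * (N₃:ℝ) / (Cc:ℝ)))^2 := by
        refine h1R.trans ?_
        apply mul_le_mul h2R (pow_le_pow_left₀ (by positivity) hKprod 2) (by positivity)
          (by positivity)
    _ = 128 * C₀^2 * ((N₁:ℝ)*(N₂:ℝ)*(N₃:ℝ))^2 * ((m:ℝ)^ε / (m:ℝ)) := by
        field_simp
        ring
    _ = 128 * C₀^2 * ((N₁ * N₂ * N₃ : ℕ) : ℝ) ^ 2 * (m : ℝ) ^ (ε - 1) := by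
        rw [Real.rpow_sub hM0, Real.rpow_one]
        push_cast
        ring
end
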